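/- Let n ≥ 1, let a_1,…,a_n > 0 be reals with A = Σ_{i=1}^n a_i, let p = (p_0,…,p_{n+1}) be a probability vector on {-1,1}^{n+2}, and define the linear threshold functions f(x) = sign(Σ_{i=1}^n a_i x_i − (A/2)x_{n+1} − (A/2)x_{n+2}) and g(x) = sign(Σ_{i=1}^n a_i x_i + (A/2)x_{n+1} + (A/2)x_{n+2}) on {-1,1}^{n+2}. Then for each i ∈ {n+1, n+2}: \tilde g^p(i) = \tilde f^p(i) + 2·Σ_{t=0}^{n−1} binom(n,t)·(p_t + p_{t+1}). -/

import Mathlib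

open Finset

noncomputable section

/-- `sgn z` is `1` if `z ≥ 0` and `-1` otherwise. -/
def sgn (z : ℝ) : ℝ := if 0 ≤ z then 1 else -1

/-- The ±1 real value encoded by a Boolean coordinate (`true ↦ 1`, `false ↦ -1`). -/
def chi (b : Bool) : ℝ := if b then 1 else -1

/-- `wt x` is the number of coordinates of `x ∈ {-1,1}^n` equal to `1`. -/
def wt {n : ℕ} (x : Fin n → Bool) : ℤ :=
  ((Finset.univ.filter fun i => x i = true).card : ℤ)

/-- Inner product `w · x` of a real vector `w` with a ±1 vector `x`. -/
def dotp {n : ℕ} (w : Fin n → ℝ) (x : Fin n → Bool) : ℝ :=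
  ∑ i, w i * chi (x i)

/-- The `i`-th semivalue of `f : {-1,1}^n → {-1,1}` with respect to the
probability vector `p` (indexed by `ℤ`, with `p t = 0` out of range):
`∑_{x : x_i = -1} p_{wt x} f(x) x_i + ∑_{x : x_i = 1} p_{wt x - 1} f(x) x_i`. -/
def semivalue {n : ℕ} (p : ℤ → ℝ) (f : (Fin n → Bool) → ℝ) (i : Fin n) : ℝ :=
  ∑ x : Fin n → Bool, (if x i then p (wt x - 1) else p (wt x)) * f x * chi (x i)

/-- `μ'_p(x) = p_{wt x} + p_{wt x - 1}`. -/
def mu' {n : ℕ} (p : ℤ → ℝ) (x : Fin n → Bool) : ℝ := p (wt x) + p (wt x - 1)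

/-- The normalizing factor `Λ(p) = ∑_x μ'_p(x)`. -/
def lam (n : ℕ) (p : ℤ → ℝ) : ℝ := ∑ x : Fin n → Bool, mu' p x

/-- The probability distribution `μ_p(x) = μ'_p(x)/Λ(p)`. -/
def mu {n : ℕ} (p : ℤ → ℝ) (x : Fin n → Bool) : ℝ := mu' p x / lam n p

def eB (n : ℕ) : (Fin n → Bool) ≃ Finset (Fin n) where
  toFun y := Finset.univ.filter fun i => y i = true
  invFun s i := decide (i ∈ s)
  left_inv y := by funext i; simp
  right_inv s := by ext i; simp

lemma sum_wt {n : ℕ} (F : ℤ → ℝ) :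
    ∑ y : Fin n → Bool, F (wt y) = ∑ t ∈ Finset.range (n + 1), (n.choose t : ℝ) * F (t : ℤ) := by
  have h1 : ∑ y : Fin n → Bool, F (wt y) = ∑ s : Finset (Fin n), F (s.card : ℤ) := by
    apply Fintype.sum_equiv (eB n)
    intro y
    simp only [eB, Equiv.coe_fn_mk, wt]
  rw [h1]
  have h2 : ∑ s : Finset (Fin n), F (s.card : ℤ)
      = ∑ s ∈ (Finset.univ : Finset (Fin n)).powerset, F (s.card : ℤ) := by
    rw [Finset.powerset_univ]
  rw [h2, Finset.sum_powerset, Finset.card_univ, Fintype.card_fin]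
  refine Finset.sum_congr rfl fun t ht => ?_
  have : ∀ s ∈ Finset.powersetCard t (Finset.univ : Finset (Fin n)),
      F (s.card : ℤ) = F (t : ℤ) := by
    intro s hs
    rw [(Finset.mem_powersetCard.mp hs).2]
  rw [Finset.sum_congr rfl this, Finset.sum_const, Finset.card_powersetCard,
    Finset.card_univ, Fintype.card_fin, nsmul_eq_mul]

lemma wt_eq_n_iff {n : ℕ} (y : Fin n → Bool) : wt y = (n : ℤ) ↔ ∀ i, y i = true := by
  unfold wt
  rw [Nat.cast_inj]
  constructor
  · intro h i
    have h2 : (Finset.univ.filter fun i => y i = true) = Finset.univ := by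
      apply Finset.eq_univ_of_card
      rw [h, Fintype.card_fin]
    have := Finset.eq_univ_iff_forall.mp h2 i
    simpa using this
  · intro h
    rw [Finset.filter_true_of_mem fun i _ => h i, Finset.card_univ, Fintype.card_fin]

lemma wt_snoc {n : ℕ} (y : Fin n → Bool) (u : Bool) :
    wt (Fin.snoc y u) = wt y + (if u then 1 else 0) := by
  unfold wt
  have h : (Finset.univ.filter fun i : Fin (n+1) => (Fin.snoc y u : Fin (n+1) → Bool) i = true).card
      = (Finset.univ.filter fun i => y i = true).card + (if u then 1 else 0) := by
    rw [Finset.card_filter, Finset.card_filter, Fin.sum_univ_castSucc]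
    simp [Fin.snoc_castSucc, Fin.snoc_last]
  rw [h]
  push_cast
  split <;> simp

def E (n : ℕ) : ((Fin n → Bool) × Bool × Bool) ≃ (Fin (n + 2) → Bool) where
  toFun yuv := Fin.snoc (Fin.snoc yuv.1 yuv.2.1) yuv.2.2
  invFun x := (fun k => x (Fin.castAdd 2 k), x ⟨n, Nat.lt_succ_of_lt (Nat.lt_succ_self n)⟩, x ⟨n + 1, Nat.lt_succ_self (n + 1)⟩)
  left_inv := by
    rintro ⟨y, u, v⟩
    refine Prod.ext ?_ (Prod.ext ?_ ?_)
    · funext k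
      show (Fin.snoc (Fin.snoc y u) v : Fin (n+2) → Bool) (Fin.castAdd 2 k) = y k
      rw [show (Fin.castAdd 2 k : Fin (n + 2)) = Fin.castSucc (Fin.castSucc k) from rfl,
        Fin.snoc_castSucc, Fin.snoc_castSucc]
    · show (Fin.snoc (Fin.snoc y u) v : Fin (n+2) → Bool) ⟨n, Nat.lt_succ_of_lt (Nat.lt_succ_self n)⟩ = u
      rw [show (⟨n, Nat.lt_succ_of_lt (Nat.lt_succ_self n)⟩ : Fin (n + 2)) = Fin.castSucc (Fin.last n) from rfl,
        Fin.snoc_castSucc, Fin.snoc_last]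
    · show (Fin.snoc (Fin.snoc y u) v : Fin (n+2) → Bool) ⟨n + 1, Nat.lt_succ_self (n + 1)⟩ = v
      rw [show (⟨n + 1, Nat.lt_succ_self (n + 1)⟩ : Fin (n + 2)) = Fin.last (n + 1) from rfl, Fin.snoc_last]
  right_inv := by
    intro x
    funext i
    show (Fin.snoc (Fin.snoc (fun k => x (Fin.castAdd 2 k)) (x ⟨n, Nat.lt_succ_of_lt (Nat.lt_succ_self n)⟩))
      (x ⟨n + 1, Nat.lt_succ_self (n + 1)⟩) : Fin (n+2) → Bool) i = x i
    refine Fin.lastCases ?_ (fun j => ?_) i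
    · rw [Fin.snoc_last]; rfl
    · refine Fin.lastCases ?_ (fun k => ?_) j
      · rw [Fin.snoc_castSucc, Fin.snoc_last]; rfl
      · rw [Fin.snoc_castSucc, Fin.snoc_castSucc]
        rfl

lemma E_castAdd {n : ℕ} (y : Fin n → Bool) (u v : Bool) (k : Fin n) :
    E n (y, u, v) (Fin.castAdd 2 k) = y k := by
  show (Fin.snoc (Fin.snoc y u) v : Fin (n+2) → Bool) (Fin.castAdd 2 k) = y k
  rw [show (Fin.castAdd 2 k : Fin (n + 2)) = Fin.castSucc (Fin.castSucc k) from rfl,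
    Fin.snoc_castSucc, Fin.snoc_castSucc]

lemma E_n {n : ℕ} (y : Fin n → Bool) (u v : Bool) :
    E n (y, u, v) ⟨n, Nat.lt_succ_of_lt (Nat.lt_succ_self n)⟩ = u := by
  show (Fin.snoc (Fin.snoc y u) v : Fin (n+2) → Bool) ⟨n, by omega⟩ = u
  rw [show (⟨n, by omega⟩ : Fin (n + 2)) = Fin.castSucc (Fin.last n) from rfl,
    Fin.snoc_castSucc, Fin.snoc_last]

lemma E_n1 {n : ℕ} (y : Fin n → Bool) (u v : Bool) :
    E n (y, u, v) ⟨n + 1, Nat.lt_succ_self (n + 1)⟩ = v := by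
  show (Fin.snoc (Fin.snoc y u) v : Fin (n+2) → Bool) ⟨n + 1, by omega⟩ = v
  rw [show (⟨n + 1, by omega⟩ : Fin (n + 2)) = Fin.last (n + 1) from rfl, Fin.snoc_last]

lemma wt_E {n : ℕ} (y : Fin n → Bool) (u v : Bool) :
    wt (E n (y, u, v)) = wt y + (if u then 1 else 0) + (if v then 1 else 0) := by
  show wt ((Fin.snoc (Fin.snoc y u) v : Fin (n+2) → Bool)) = _
  rw [wt_snoc, wt_snoc]


theorem stmt12MAIN (n : ℕ) (hn : 1 ≤ n) (a : Fin n → ℝ) (ha : ∀ i, 0 < a i)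
    (A : ℝ) (hA : A = ∑ i, a i)
    (p : ℤ → ℝ)
    (hp_nonneg : ∀ t : ℤ, 0 ≤ p t)
    (hp_out : ∀ t : ℤ, (t < 0 ∨ (n : ℤ) + 2 ≤ t) → p t = 0)
    (hp_sum : ∑ t ∈ Finset.range (n + 2), ((n + 1).choose t : ℝ) * p (t : ℤ) = 1)
    (f g : (Fin (n + 2) → Bool) → ℝ)
    (hf : ∀ x : Fin (n + 2) → Bool,
      f x = sgn ((∑ i : Fin n, a i * chi (x (Fin.castAdd 2 i)))
        - A / 2 * chi (x ⟨n, Nat.lt_succ_of_lt (Nat.lt_succ_self n)⟩) - A / 2 * chi (x ⟨n + 1, Nat.lt_succ_self (n + 1)⟩)))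
    (hg : ∀ x : Fin (n + 2) → Bool,
      g x = sgn ((∑ i : Fin n, a i * chi (x (Fin.castAdd 2 i)))
        + A / 2 * chi (x ⟨n, Nat.lt_succ_of_lt (Nat.lt_succ_self n)⟩) + A / 2 * chi (x ⟨n + 1, Nat.lt_succ_self (n + 1)⟩))) :
    ∀ i : Fin (n + 2), n ≤ (i : ℕ) →
      semivalue p g i = semivalue p f i
        + 2 * ∑ t ∈ Finset.range n, (n.choose t : ℝ) * (p (t : ℤ) + p ((t : ℤ) + 1)) := by
  intro i hi
  have hiv : i = (⟨n, Nat.lt_succ_of_lt (Nat.lt_succ_self n)⟩ : Fin (n + 2))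
      ∨ i = (⟨n + 1, Nat.lt_succ_self (n + 1)⟩ : Fin (n + 2)) := by
    have h2 := i.isLt
    rcases Nat.eq_or_lt_of_le hi with h | h
    · left; exact Fin.ext h.symm
    · right; exact Fin.ext (show (i : ℕ) = n + 1 by omega)
  set extra : (Fin (n + 2) → Bool) → ℝ := fun x =>
    if x ⟨n, Nat.lt_succ_of_lt (Nat.lt_succ_self n)⟩
        = x ⟨n + 1, Nat.lt_succ_self (n + 1)⟩ ∧ ¬(∀ k : Fin n, x (Fin.castAdd 2 k) = true)
    then 2 * (if x ⟨n, Nat.lt_succ_of_lt (Nat.lt_succ_self n)⟩ then p (wt x - 1) else p (wt x))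
    else 0 with hextra
  have hchiT : chi true = 1 := rfl
  have hchiF : chi false = -1 := rfl
  have key : ∀ x : Fin (n + 2) → Bool,
      (if x i then p (wt x - 1) else p (wt x)) * g x * chi (x i)
        = (if x i then p (wt x - 1) else p (wt x)) * f x * chi (x i) + extra x := by
    intro x
    rw [hf x, hg x]
    set S := ∑ k : Fin n, a k * chi (x (Fin.castAdd 2 k)) with hS
    have hterm_le : ∀ k : Fin n, a k * chi (x (Fin.castAdd 2 k)) ≤ a k := by
      intro k
      have := (ha k).le
      cases hx : x (Fin.castAdd 2 k) <;> simp [chi, hx] <;> linarith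
    have hterm_ge : ∀ k : Fin n, -a k ≤ a k * chi (x (Fin.castAdd 2 k)) := by
      intro k
      have := (ha k).le
      cases hx : x (Fin.castAdd 2 k) <;> simp [chi, hx] <;> linarith
    have hSA : S ≤ A := by
      rw [hA]
      exact Finset.sum_le_sum fun k _ => hterm_le k
    have hAS : -A ≤ S := by
      have h3 : ∑ k : Fin n, -a k ≤ S := Finset.sum_le_sum fun k _ => hterm_ge k
      rw [Finset.sum_neg_distrib] at h3
      rw [hA]; linarith [h3]
    have hsgnSA : sgn (S + A) = 1 := if_pos (by linarith)
    by_cases hall : ∀ k : Fin n, x (Fin.castAdd 2 k) = true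
    · have hSeq : S = A := by
        rw [hA, hS]
        exact Finset.sum_congr rfl fun k _ => by rw [hall k, hchiT, mul_one]
      have hsgn0 : sgn (S - A) = 1 := by rw [hSeq, sub_self]; exact if_pos le_rfl
      rcases hiv with rfl | rfl <;>
        cases hb1 : x ⟨n, Nat.lt_succ_of_lt (Nat.lt_succ_self n)⟩ <;>
        cases hb2 : x ⟨n + 1, Nat.lt_succ_self (n + 1)⟩ <;>
        simp only [hextra, hb1, hb2, hchiT, hchiF, hall, not_true, and_false, if_false,
          Bool.false_eq_true, Bool.true_eq_false, false_and, and_true, true_and, if_true,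
          not_false_iff, ite_false, ite_true, eq_self_iff_true, implies_true, not_true_eq_false] <;>
        simp only [show S + A / 2 * (-1) + A / 2 * (-1) = S - A from by ring,
          show S - A / 2 * (-1) - A / 2 * (-1) = S + A from by ring,
          show S + A / 2 * 1 + A / 2 * 1 = S + A from by ring,
          show S - A / 2 * 1 - A / 2 * 1 = S - A from by ring,
          show S + A / 2 * (-1) + A / 2 * 1 = S from by ring,
          show S - A / 2 * (-1) - A / 2 * 1 = S from by ring,
          show S + A / 2 * 1 + A / 2 * (-1) = S from by ring,
          show S - A / 2 * 1 - A / 2 * (-1) = S from by ring,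
          hsgnSA, hsgn0] <;>
        ring
    · obtain ⟨k0, hk0⟩ := not_forall.mp hall
      have hSlt : S < A := by
        rw [hA]
        refine Finset.sum_lt_sum (fun j _ => hterm_le j) ⟨k0, Finset.mem_univ k0, ?_⟩
        rw [Bool.not_eq_true] at hk0
        rw [hk0, hchiF]
        have := ha k0; linarith
      have hsgnm : sgn (S - A) = -1 := if_neg (by push_neg; linarith)
      rcases hiv with rfl | rfl <;>
        cases hb1 : x ⟨n, Nat.lt_succ_of_lt (Nat.lt_succ_self n)⟩ <;>
        cases hb2 : x ⟨n + 1, Nat.lt_succ_self (n + 1)⟩ <;>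
        simp only [hextra, hb1, hb2, hchiT, hchiF, hall, not_true, and_false, if_false,
          Bool.false_eq_true, Bool.true_eq_false, false_and, and_true, true_and, if_true,
          not_false_iff, ite_false, ite_true, eq_self_iff_true, implies_true, not_false_eq_true] <;>
        simp only [show S + A / 2 * (-1) + A / 2 * (-1) = S - A from by ring,
          show S - A / 2 * (-1) - A / 2 * (-1) = S + A from by ring,
          show S + A / 2 * 1 + A / 2 * 1 = S + A from by ring,
          show S - A / 2 * 1 - A / 2 * 1 = S - A from by ring,
          show S + A / 2 * (-1) + A / 2 * 1 = S from by ring,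
          show S - A / 2 * (-1) - A / 2 * 1 = S from by ring,
          show S + A / 2 * 1 + A / 2 * (-1) = S from by ring,
          show S - A / 2 * 1 - A / 2 * (-1) = S from by ring,
          hsgnSA, hsgnm] <;>
        ring
  have hstep : semivalue p g i = semivalue p f i + ∑ x : Fin (n + 2) → Bool, extra x := by
    unfold semivalue
    rw [← Finset.sum_add_distrib]
    exact Finset.sum_congr rfl fun x _ => key x
  rw [hstep]
  congr 1
  have hEsum : ∑ x : Fin (n + 2) → Bool, extra x
      = ∑ yuv : (Fin n → Bool) × Bool × Bool, extra (E n yuv) :=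
    (Fintype.sum_equiv (E n) (fun yuv => extra (E n yuv)) extra (fun _ => rfl)).symm
  rw [hEsum, Fintype.sum_prod_type]
  have hinner : ∀ y : Fin n → Bool,
      (∑ uv : Bool × Bool, extra (E n (y, uv)))
        = (fun t : ℤ => if t = (n : ℤ) then 0 else 2 * (p t + p (t + 1))) (wt y) := by
    intro y
    simp only [Fintype.sum_prod_type, Fintype.sum_bool]
    by_cases hall : ∀ k : Fin n, y k = true
    · have hwt : wt y = (n : ℤ) := (wt_eq_n_iff y).mpr hall
      simp [hextra, E_n, E_n1, E_castAdd, wt_E, hall, hwt]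
    · have hwt : wt y ≠ (n : ℤ) := fun h => hall ((wt_eq_n_iff y).mp h)
      simp only [hextra, E_n, E_n1, E_castAdd, wt_E, hall, hwt,
        show wt y + 1 + 1 - 1 = wt y + 1 from by ring,
        show wt y + 0 + 0 = wt y from by ring]
      simp [hall, hwt]
      ring
  have h5 : (∑ y : Fin n → Bool, ∑ uv : Bool × Bool, extra (E n (y, uv)))
      = ∑ y : Fin n → Bool,
        (fun t : ℤ => if t = (n : ℤ) then 0 else 2 * (p t + p (t + 1))) (wt y) :=
    Finset.sum_congr rfl fun y _ => hinner y
  rw [h5, sum_wt (fun t => if t = (n : ℤ) then 0 else 2 * (p t + p (t + 1))),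
    Finset.sum_range_succ]
  simp only [if_pos rfl, if_true, ite_true, mul_zero, add_zero]
  rw [Finset.mul_sum]
  apply Finset.sum_congr rfl
  intro t ht
  have htn : ((t : ℤ)) ≠ (n : ℤ) := by
    have := Finset.mem_range.mp ht
    exact_mod_cast Nat.ne_of_lt this
  rw [if_neg htn]
  ring

theorem stmt12 (n : ℕ) (hn : 1 ≤ n) (a : Fin n → ℝ) (ha : ∀ i, 0 < a i)
    (A : ℝ) (hA : A = ∑ i, a i)
    (p : ℤ → ℝ)
    (hp_nonneg : ∀ t : ℤ, 0 ≤ p t)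
    (hp_out : ∀ t : ℤ, (t < 0 ∨ (n : ℤ) + 2 ≤ t) → p t = 0)
    (hp_sum : ∑ t ∈ Finset.range (n + 2), ((n + 1).choose t : ℝ) * p (t : ℤ) = 1)
    (f g : (Fin (n + 2) → Bool) → ℝ)
    (hf : ∀ x : Fin (n + 2) → Bool,
      f x = sgn ((∑ i : Fin n, a i * chi (x (Fin.castAdd 2 i)))
        - A / 2 * chi (x ⟨n, by omega⟩) - A / 2 * chi (x ⟨n + 1, by omega⟩)))
    (hg : ∀ x : Fin (n + 2) → Bool,
      g x = sgn ((∑ i : Fin n, a i * chi (x (Fin.castAdd 2 i)))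
        + A / 2 * chi (x ⟨n, by omega⟩) + A / 2 * chi (x ⟨n + 1, by omega⟩))) :
    ∀ i : Fin (n + 2), n ≤ (i : ℕ) →
      semivalue p g i = semivalue p f i
        + 2 * ∑ t ∈ Finset.range n, (n.choose t : ℝ) * (p (t : ℤ) + p ((t : ℤ) + 1)) :=
  stmt12MAIN n hn a ha A hA p hp_nonneg hp_out hp_sum f g hf hg
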